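/- For all m with 1 ≤ m < ω, the end-homogeneous amalgam of two copies of I_m is I_{m+1}, where I_k is the identity of the coloring of {0,1}^{k+1} by longest common initial segments. -/

import Mathlib

/-- The longest common initial segment of two binary strings. -/
def lcis : List Bool → List Bool → List Bool
  | a :: as, b :: bs => if a = b then a :: lcis as bs else []
  | _, _ => []

theorem lcis_comm : ∀ a b : List Bool, lcis a b = lcis b a := by
  intro a
  induction a with
  | nil => intro b; cases b <;> rfl
  | cons x xs ih =>
    intro b
    cases b with
    | nil => rfl
    | cons y ys =>
      by_cases h : x = y
      · subst h; simp [lcis, ih]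
      · simp [lcis, h, Ne.symm h]

/-- Binary strings of length `m + 1`. -/
def Str (m : ℕ) : Type := {l : List Bool // l.length = m + 1}

/-- The coloring `I_m` on `{0,1}^{m+1}`, coloring a pair by its longest common
initial segment. -/
def colI (m : ℕ) : Sym2 (Str m) → List Bool :=
  Sym2.lift ⟨fun a b => lcis a.1 b.1, fun a b => lcis_comm a.1 b.1⟩

/-- `f` realizes `g`: there is an injection `k` from the field of `g` into the field of `f`
such that differently `f`-colored image pairs come from differently `g`-colored pairs. -/
def Realizes {α β C D : Type*} (f : Sym2 β → C) (g : Sym2 α → D) : Prop :=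
  ∃ k : α ↪ β, ∀ x y u v : α, x ≠ y → u ≠ v →
    f s(k x, k y) ≠ f s(k u, k v) → g s(x, y) ≠ g s(u, v)

/-- The end-homogeneous amalgam of two copies of `I_m`: the two representative colorings are
taken on disjoint fields (the two summands) with disjoint ranges (tagged by `0` and `1`), and
all cross pairs receive one common new color `Sum.inr ()`. -/
def amalg2 (m : ℕ) : Sym2 (Str m ⊕ Str m) → ((Fin 2 × List Bool) ⊕ Unit) :=
  Sym2.lift ⟨fun a b =>
    match a, b with
    | .inl x, .inl y => .inl (0, lcis x.1 y.1)
    | .inr x, .inr y => .inl (1, lcis x.1 y.1)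
    | _, _ => .inr (),
    by rintro (x | x) (y | y) <;> simp [lcis_comm]⟩

def consS {m : ℕ} (b : Bool) (t : Str m) : Str (m+1) := ⟨b :: t.1, by simp [t.2]⟩

def mergeF (m : ℕ) : Str m ⊕ Str m → Str (m+1)
  | .inl t => consS false t
  | .inr t => consS true t

def tailS {m : ℕ} (s : Str (m+1)) : Str m := ⟨s.1.tail, by simp [s.2]⟩

def splitF (m : ℕ) (s : Str (m+1)) : Str m ⊕ Str m :=
  if s.1.headI then .inr (tailS s) else .inl (tailS s)

lemma str_cons {m : ℕ} (s : Str (m+1)) : s.1 = s.1.headI :: s.1.tail := by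
  rcases s with ⟨l, hl⟩
  cases l with
  | nil => simp at hl
  | cons a t => rfl

lemma splitF_cons {m : ℕ} (s : Str (m+1)) (a : Bool) (t : List Bool)
    (h : s.1 = a :: t) (ht : t.length = m + 1) :
    splitF m s = if a then .inr ⟨t, ht⟩ else .inl ⟨t, ht⟩ := by
  unfold splitF tailS
  simp [h]

lemma splitF_inj {m : ℕ} : Function.Injective (splitF m) := by
  intro s s' h
  unfold splitF at h
  apply Subtype.ext
  rw [str_cons s, str_cons s']
  by_cases h1 : s.1.headI <;> by_cases h2 : s'.1.headI <;> simp [h1, h2] at h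
  · have h2' : s.1.tail = s'.1.tail := congrArg Subtype.val h
    rw [h1, h2, h2']
  · have h2' : s.1.tail = s'.1.tail := congrArg Subtype.val h
    simp only [h1, h2]
    rw [h2']

lemma mergeF_inj {m : ℕ} : Function.Injective (mergeF m) := by
  rintro (s | s) (s' | s') h <;> have h2 := congrArg Subtype.val h <;>
    simp only [mergeF, consS, List.cons.injEq] at h2 <;> simp_all
  · exact Subtype.ext h2
  · exact Subtype.ext h2

lemma colI_mk {n : ℕ} (x y : Str n) : colI n s(x, y) = lcis x.1 y.1 := rfl

lemma amalg2_ll {m : ℕ} (x y : Str m) :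
    amalg2 m s(Sum.inl x, Sum.inl y) = Sum.inl (0, lcis x.1 y.1) := rfl

lemma amalg2_rr {m : ℕ} (x y : Str m) :
    amalg2 m s(Sum.inr x, Sum.inr y) = Sum.inl (1, lcis x.1 y.1) := rfl

lemma amalg2_lr {m : ℕ} (x y : Str m) :
    amalg2 m s(Sum.inl x, Sum.inr y) = Sum.inr () := rfl

lemma amalg2_rl {m : ℕ} (x y : Str m) :
    amalg2 m s(Sum.inr x, Sum.inl y) = Sum.inr () := rfl

/-- For all `m ≥ 1`, the end-homogeneous amalgam of two copies of `I_m` is `I_{m+1}`: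
each realizes the other. -/
theorem amalgam_of_Im_is_Isucc (m : ℕ) (hm : 1 ≤ m) :
    Realizes (amalg2 m) (colI (m + 1)) ∧ Realizes (colI (m + 1)) (amalg2 m) := by
  constructor
  · refine ⟨⟨splitF m, splitF_inj⟩, ?_⟩
    intro x y u v hxy huv h heq
    apply h; clear h
    obtain ⟨a, t, hx, ht⟩ : ∃ a t, x.1 = a :: t ∧ t.length = m + 1 := by
      refine ⟨_, _, str_cons x, ?_⟩; simp [x.2]
    obtain ⟨b, p, hy, hp⟩ : ∃ b p, y.1 = b :: p ∧ p.length = m + 1 := by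
      refine ⟨_, _, str_cons y, ?_⟩; simp [y.2]
    obtain ⟨c, q, hu, hq⟩ : ∃ c q, u.1 = c :: q ∧ q.length = m + 1 := by
      refine ⟨_, _, str_cons u, ?_⟩; simp [u.2]
    obtain ⟨d, r, hv, hr⟩ : ∃ d r, v.1 = d :: r ∧ r.length = m + 1 := by
      refine ⟨_, _, str_cons v, ?_⟩; simp [v.2]
    simp only [colI, Sym2.lift_mk, hx, hy, hu, hv] at heq
    show amalg2 m s(splitF m x, splitF m y) = amalg2 m s(splitF m u, splitF m v)
    rw [splitF_cons x a t hx ht, splitF_cons y b p hy hp,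
        splitF_cons u c q hu hq, splitF_cons v d r hv hr]
    cases a <;> cases b <;> cases c <;> cases d <;>
      simp_all [lcis, amalg2_ll, amalg2_rr, amalg2_lr, amalg2_rl] <;>
      rw [amalg2, Sym2.lift_mk, Sym2.lift_mk] <;> simp_all
  · refine ⟨⟨mergeF m, mergeF_inj⟩, ?_⟩
    intro x y u v hxy huv h heq
    apply h; clear h
    rcases x with x | x <;> rcases y with y | y <;> rcases u with u | u <;> rcases v with v | v <;>
      simp_all [amalg2_ll, amalg2_rr, amalg2_lr, amalg2_rl, colI_mk, mergeF, consS, lcis,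
        Fin.ext_iff] <;>
      change lcis _ _ = lcis _ _ <;> simp_all [lcis]
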